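/- Let α > 0 and ν < c. If f ∈ Dom J^α_{0+,c} ∩ X_{[ν,c]}, then J^α_{0+,c} f ∈ X_ν with ‖J^α_{0+,c} f‖_{X_ν} ≤ ‖f‖_{X_ν}/(c−ν)^α, and M[J^α_{0+,c} f](ν+it) = (c−ν−it)^{-α} M[f](ν+it) for all t ∈ ℝ. -/

import Mathlib

open MeasureTheory Set

def memDomJ (α c : ℝ) (f : ℝ → ℂ) : Prop :=
  ∀ᵐ x ∂(volume.restrict (Set.Ioi (0 : ℝ))),
    (∫⁻ u in Set.Ioo (0 : ℝ) x,
      ENNReal.ofReal (u ^ (c - 1) * Real.log (x / u) ^ (α - 1) * ‖f u‖)) < ⊤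

noncomputable def hadamardJ (α c : ℝ) (f : ℝ → ℂ) (x : ℝ) : ℂ :=
  ((1 / Real.Gamma α : ℝ) : ℂ) *
    ∫ u in Set.Ioo (0 : ℝ) x,
      (((u / x) ^ c * Real.log (x / u) ^ (α - 1) / u : ℝ) : ℂ) * f u

def memXc (c : ℝ) (f : ℝ → ℂ) : Prop :=
  IntegrableOn (fun x : ℝ => x ^ (c - 1) * ‖f x‖) (Set.Ioi 0)

noncomputable def mellinT (f : ℝ → ℂ) (s : ℂ) : ℂ :=
  ∫ u in Set.Ioi (0 : ℝ), (u : ℂ) ^ (s - 1) * f u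


open Complex Filter
open scoped ENNReal NNReal
section Helpers

lemma integrableOn_rpow_mul_exp_neg {a r : ℝ} (ha : 0 < a) (hr : 0 < r) :
    IntegrableOn (fun t : ℝ => t ^ (a - 1) * Real.exp (-(r * t))) (Ioi 0) := by
  have h0 : IntegrableOn (fun t : ℝ => Real.exp (-t) * t ^ (a - 1)) (Ioi 0) :=
    Real.GammaIntegral_convergent ha
  have h1 : IntegrableOn (fun t : ℝ => Real.exp (-(r * t)) * (r * t) ^ (a - 1)) (Ioi 0) := by
    have := (integrableOn_Ioi_comp_mul_left_iff
      (fun t : ℝ => Real.exp (-t) * t ^ (a - 1)) 0 hr).mpr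
    rw [mul_zero] at this
    exact this h0
  have h2 := h1.const_mul (r ^ (1 - a))
  refine IntegrableOn.congr_fun h2 (fun t ht => ?_) measurableSet_Ioi
  have ht0 : (0:ℝ) < t := ht
  rw [Real.mul_rpow hr.le ht0.le]
  rw [show r ^ (1-a) * (Real.exp (-(r*t)) * (r ^ (a-1) * t ^ (a-1)))
      = (r ^ (1-a) * r ^ (a-1)) * (t ^ (a-1) * Real.exp (-(r*t))) by ring,
    ← Real.rpow_add hr]
  norm_num
lemma gamma_cintegral {a : ℝ} (ha : 0 < a) {z : ℂ} (hz : 0 < z.re) :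
    ∫ t in Ioi (0:ℝ), ((t ^ (a - 1) : ℝ) : ℂ) * Complex.exp (-(z * t))
      = (Real.Gamma a : ℂ) * z ^ (-(a:ℂ)) := by
  set U : Set ℂ := {w : ℂ | 0 < w.re} with hU
  set F : ℂ → ℂ := fun w => ∫ t in Ioi (0:ℝ), ((t ^ (a - 1) : ℝ) : ℂ) * Complex.exp (-(w * t))
    with hF
  set G : ℂ → ℂ := fun w => (Real.Gamma a : ℂ) * w ^ (-(a:ℂ)) with hG
  have hUopen : IsOpen U := isOpen_lt continuous_const continuous_re
  have hmble : ∀ w : ℂ, Measurable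
      (fun t : ℝ => ((t ^ (a - 1) : ℝ) : ℂ) * Complex.exp (-(w * t))) := by
    intro w; fun_prop
  have hInt : ∀ w : ℂ, 0 < w.re →
      Integrable (fun t : ℝ => ((t ^ (a - 1) : ℝ) : ℂ) * Complex.exp (-(w * t)))
        (volume.restrict (Ioi 0)) := by
    intro w hw
    refine Integrable.mono' (integrableOn_rpow_mul_exp_neg ha hw)
      ((hmble w).aestronglyMeasurable) ?_
    filter_upwards [ae_restrict_mem measurableSet_Ioi] with t ht
    have ht0 : (0:ℝ) < t := ht
    rw [norm_mul, Complex.norm_real, Complex.norm_exp]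
    have h2 : (-(w * (t:ℂ))).re = -(w.re * t) := by simp
    rw [h2, Real.norm_eq_abs, _root_.abs_of_nonneg (Real.rpow_nonneg ht0.le _)]
  have hFdiff : ∀ w ∈ U, DifferentiableAt ℂ F w := by
    intro w hw
    have hw' : 0 < w.re := hw
    set δ : ℝ := w.re / 2 with hδ
    have hδ0 : 0 < δ := by positivity
    have key := hasDerivAt_integral_of_dominated_loc_of_deriv_le (F := fun (v : ℂ) (t : ℝ) =>
        ((t ^ (a - 1) : ℝ) : ℂ) * Complex.exp (-(v * t)))
      (F' := fun (v : ℂ) (t : ℝ) =>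
        ((t ^ (a - 1) : ℝ) : ℂ) * (Complex.exp (-(v * t)) * (-(t:ℂ))))
      (x₀ := w) (bound := fun t : ℝ => t ^ ((a+1) - 1) * Real.exp (-(δ * t)))
      (μ := volume.restrict (Ioi 0)) (s := Metric.ball w δ) (Metric.ball_mem_nhds w hδ0)
      ?_ (hInt w hw') ?_ ?_ ?_ ?_
    · exact key.2.differentiableAt
    · exact Eventually.of_forall fun v => ((hmble v).aestronglyMeasurable)
    · have : Measurable (fun t : ℝ =>
          ((t ^ (a - 1) : ℝ) : ℂ) * (Complex.exp (-(w * t)) * (-(t:ℂ)))) := by fun_prop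
      exact this.aestronglyMeasurable
    · filter_upwards [ae_restrict_mem measurableSet_Ioi] with t ht v hv
      have ht0 : (0:ℝ) < t := ht
      have hvre : δ ≤ v.re := by
        have h1 : |v.re - w.re| ≤ ‖v - w‖ := by
          simpa using Complex.abs_re_le_norm (v - w)
        have h2 : ‖v - w‖ < δ := by
          simpa [Metric.mem_ball, Complex.dist_eq] using hv
        have := abs_lt.mp (lt_of_le_of_lt h1 h2)
        simp only [hδ] at *
        linarith
      have hnorm : ‖((t ^ (a - 1) : ℝ) : ℂ) * (Complex.exp (-(v * t)) * (-(t:ℂ)))‖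
          = t ^ (a-1) * (Real.exp (-(v.re * t)) * t) := by
        rw [norm_mul, norm_mul, norm_neg, Complex.norm_real, Complex.norm_real,
          Complex.norm_exp, Real.norm_eq_abs, Real.norm_eq_abs,
          _root_.abs_of_nonneg (Real.rpow_nonneg ht0.le _), _root_.abs_of_nonneg ht0.le]
        congr 2
        simp
      rw [hnorm]
      have hexp : Real.exp (-(v.re * t)) ≤ Real.exp (-(δ * t)) := by
        apply Real.exp_le_exp.mpr; nlinarith
      calc t ^ (a-1) * (Real.exp (-(v.re * t)) * t)
          ≤ t ^ (a-1) * (Real.exp (-(δ * t)) * t) := by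
            have h3 : (0:ℝ) ≤ t ^ (a-1) := Real.rpow_nonneg ht0.le _
            exact mul_le_mul_of_nonneg_left (mul_le_mul_of_nonneg_right hexp ht0.le) h3
        _ = t ^ ((a+1)-1) * Real.exp (-(δ*t)) := by
            rw [show (a+1)-1 = (a-1) + 1 by ring, Real.rpow_add ht0, Real.rpow_one]; ring
    · exact integrableOn_rpow_mul_exp_neg (by linarith) hδ0
    · filter_upwards [ae_restrict_mem measurableSet_Ioi] with t _
      intro v _
      have h1 : HasDerivAt (fun v : ℂ => -(v * (t:ℂ))) (-(t:ℂ)) v := by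
        exact (hasDerivAt_mul_const (t:ℂ)).neg
      exact (h1.cexp).const_mul _
  have hGdiff : ∀ w ∈ U, DifferentiableAt ℂ G w := by
    intro w hw
    exact DifferentiableAt.const_mul
      (DifferentiableAt.cpow differentiableAt_id (differentiableAt_const _) (Or.inl hw)) _
  have hFan : AnalyticOnNhd ℂ F U :=
    DifferentiableOn.analyticOnNhd (fun w hw => (hFdiff w hw).differentiableWithinAt) hUopen
  have hGan : AnalyticOnNhd ℂ G U :=
    DifferentiableOn.analyticOnNhd (fun w hw => (hGdiff w hw).differentiableWithinAt) hUopen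
  have hreal : ∀ r : ℝ, 0 < r → F (r:ℂ) = G (r:ℂ) := by
    intro r hr
    have h1 : ((∫ t in Ioi (0:ℝ), t ^ (a-1) * Real.exp (-(r * t)) : ℝ) : ℂ) = F (r:ℂ) := by
      rw [hF]
      simp only
      refine integral_ofReal.symm.trans <| setIntegral_congr_fun measurableSet_Ioi
        (fun t _ => ?_)
      simp only [RCLike.ofReal_mul, Complex.coe_algebraMap]
      push_cast [Complex.ofReal_exp]
      ring_nf
    rw [← h1, Real.integral_rpow_mul_exp_neg_mul_Ioi ha hr, hG]
    simp only
    rw [show ((r:ℂ)) ^ (-(a:ℂ)) = ((r:ℂ)) ^ (((-a : ℝ)):ℂ) by norm_num,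
      ← Complex.ofReal_cpow hr.le, ← Complex.ofReal_mul]
    congr 1
    rw [Real.rpow_neg hr.le, one_div, Real.inv_rpow hr.le]
    ring
  have hfreq : ∃ᶠ w in nhdsWithin (1:ℂ) {(1:ℂ)}ᶜ, F w = G w := by
    have htend : Tendsto (fun n : ℕ => ((1 + ((n:ℝ)+1)⁻¹ : ℝ) : ℂ)) atTop
        (nhdsWithin (1:ℂ) {(1:ℂ)}ᶜ) := by
      apply tendsto_nhdsWithin_of_tendsto_nhds_of_eventually_within
      · have h0 : Tendsto (fun n : ℕ => (1 + ((n:ℝ)+1)⁻¹ : ℝ)) atTop (nhds 1) := by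
          have h1 : Tendsto (fun n : ℕ => ((n:ℝ)+1)⁻¹) atTop (nhds 0) :=
            tendsto_one_div_add_atTop_nhds_zero_nat.congr (by intro n; rw [one_div])
          simpa using tendsto_const_nhds.add h1
        have h2 := (Complex.continuous_ofReal.tendsto 1).comp h0
        simpa [Function.comp_def] using h2
      · filter_upwards with n
        simp only [mem_compl_iff, mem_singleton_iff]
        intro h
        have h3 : (1 + ((n:ℝ)+1)⁻¹ : ℝ) = 1 := by exact_mod_cast h
        have h4 : (0:ℝ) < ((n:ℝ)+1)⁻¹ := by positivity
        linarith
    exact htend.frequently (Frequently.of_forall fun n => hreal _ (by positivity))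
  exact hFan.eqOn_of_preconnected_of_frequently_eq hGan
    ((convex_halfSpace_re_gt 0).isPreconnected) (show (1:ℂ) ∈ U by simp [hU]) hfreq hz
section subst

variable {u : ℝ} (hu : 0 < u)

lemma subst_deriv : ∀ t ∈ Ioi (0:ℝ),
    HasDerivWithinAt (fun t : ℝ => u * Real.exp t) (u * Real.exp t) (Ioi 0) t :=
  fun t _ => ((Real.hasDerivAt_exp t).const_mul u).hasDerivWithinAt

include hu in
lemma subst_inj : InjOn (fun t : ℝ => u * Real.exp t) (Ioi 0) :=
  fun a _ b _ h => Real.exp_injective (mul_left_cancel₀ hu.ne' h)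

include hu in
lemma subst_img : (fun t : ℝ => u * Real.exp t) '' (Ioi 0) = Ioi u := by
  ext x
  constructor
  · rintro ⟨t, ht, rfl⟩
    have : (1:ℝ) < Real.exp t := by rw [← Real.exp_zero]; exact Real.exp_lt_exp.mpr ht
    exact (lt_mul_iff_one_lt_right hu).mpr this
  · intro hx
    have hx' : u < x := hx
    refine ⟨Real.log (x / u), ?_, ?_⟩
    · exact Real.log_pos ((one_lt_div hu).mpr hx')
    · show u * Real.exp (Real.log (x / u)) = x
      rw [Real.exp_log (div_pos (lt_trans hu hx') hu)]
      field_simp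

end subst

lemma key_real {α c ν : ℝ} (hα : 0 < α) (hν : ν < c) {u : ℝ} (hu : 0 < u) :
    IntegrableOn (fun x : ℝ => x ^ (ν - 1 - c) * Real.log (x / u) ^ (α - 1)) (Ioi u) ∧
    ∫ x in Ioi u, x ^ (ν - 1 - c) * Real.log (x / u) ^ (α - 1)
      = u ^ (ν - c) * ((1 / (c - ν)) ^ α * Real.Gamma α) := by
  have hβ : 0 < c - ν := by linarith
  set g : ℝ → ℝ := fun x => x ^ (ν - 1 - c) * Real.log (x / u) ^ (α - 1) with hg
  have htrans : ∀ t ∈ Ioi (0:ℝ),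
      |u * Real.exp t| • g (u * Real.exp t)
        = u ^ (ν - c) * (t ^ (α - 1) * Real.exp (-((c - ν) * t))) := by
    intro t ht
    have ht0 : (0:ℝ) < t := ht
    have hlog : Real.log (u * Real.exp t / u) = t := by
      rw [mul_comm, mul_div_assoc, div_self hu.ne', mul_one, Real.log_exp]
    rw [hg]
    simp only [smul_eq_mul, hlog]
    rw [_root_.abs_of_nonneg (by positivity), Real.mul_rpow hu.le (Real.exp_pos t).le,
      Real.rpow_def_of_pos (Real.exp_pos t), Real.log_exp]
    rw [show u * Real.exp t * (u ^ (ν-1-c) * Real.exp (t * (ν-1-c)) * t ^ (α-1))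
        = (u * u ^ (ν-1-c)) * ((Real.exp t * Real.exp (t * (ν-1-c))) * t ^ (α-1)) by ring,
      ← Real.exp_add]
    have h1 : u * u ^ (ν-1-c) = u ^ (ν-c) := by
      nth_rewrite 1 [← Real.rpow_one u]
      rw [← Real.rpow_add hu]; ring_nf
    have h2 : t + t * (ν-1-c) = -((c-ν) * t) := by ring
    rw [h1, h2]; ring
  have hint2 : IntegrableOn
      (fun t : ℝ => u ^ (ν - c) * (t ^ (α - 1) * Real.exp (-((c - ν) * t)))) (Ioi 0) :=
    (integrableOn_rpow_mul_exp_neg hα hβ).const_mul _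
  constructor
  · rw [← subst_img hu,
      integrableOn_image_iff_integrableOn_abs_deriv_smul measurableSet_Ioi subst_deriv
        (subst_inj hu) g]
    exact IntegrableOn.congr_fun hint2 (fun t ht => (htrans t ht).symm) measurableSet_Ioi
  · rw [show Ioi u = (fun t : ℝ => u * Real.exp t) '' (Ioi 0) from (subst_img hu).symm,
      integral_image_eq_integral_abs_deriv_smul measurableSet_Ioi subst_deriv (subst_inj hu) g,
      setIntegral_congr_fun measurableSet_Ioi htrans, integral_const_mul,
      Real.integral_rpow_mul_exp_neg_mul_Ioi hα hβ]

lemma key_complex {α c ν : ℝ} (hα : 0 < α) (hν : ν < c) {s : ℂ} (hs : s.re = ν)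
    {u : ℝ} (hu : 0 < u) :
    ∫ x in Ioi u, (x:ℂ) ^ (s - 1 - c) * ((Real.log (x / u) ^ (α - 1) : ℝ) : ℂ)
      = (u:ℂ) ^ (s - c) * ((Real.Gamma α : ℂ) * ((c:ℂ) - s) ^ (-(α:ℂ))) := by
  have hβ : (0:ℝ) < c - ν := by linarith
  have hzre : 0 < ((c:ℂ) - s).re := by simp [hs]; linarith
  set g : ℝ → ℂ := fun x => (x:ℂ) ^ (s - 1 - c) * ((Real.log (x / u) ^ (α - 1) : ℝ) : ℂ) with hg
  have htrans : ∀ t ∈ Ioi (0:ℝ),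
      |u * Real.exp t| • g (u * Real.exp t)
        = (u:ℂ) ^ (s - c) * (((t ^ (α - 1) : ℝ) : ℂ) * Complex.exp (-(((c:ℂ) - s) * t))) := by
    intro t ht
    have ht0 : (0:ℝ) < t := ht
    have hlog : Real.log (u * Real.exp t / u) = t := by
      rw [mul_comm, mul_div_assoc, div_self hu.ne', mul_one, Real.log_exp]
    rw [hg]
    simp only [hlog]
    rw [_root_.abs_of_nonneg (by positivity), real_smul, Complex.ofReal_mul,
      Complex.mul_cpow_ofReal_nonneg hu.le (Real.exp_pos t).le]
    rw [show ((Real.exp t : ℝ) : ℂ) = Complex.exp (t:ℂ) from (Complex.ofReal_exp t)]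
    rw [Complex.cpow_def_of_ne_zero (Complex.exp_ne_zero _), Complex.log_exp
      (by simp [Real.pi_pos]) (by simp [Real.pi_pos.le])]
    have h1 : (u:ℂ) * (u:ℂ) ^ (s - 1 - c) = (u:ℂ) ^ (s - c) := by
      nth_rewrite 1 [← Complex.cpow_one (u:ℂ)]
      rw [← Complex.cpow_add _ _ (Complex.ofReal_ne_zero.mpr hu.ne')]
      congr 1; ring
    have h2 : Complex.exp (t:ℂ) * Complex.exp ((t:ℂ) * (s - 1 - c))
        = Complex.exp (-(((c:ℂ) - s) * t)) := by
      rw [← Complex.exp_add]; congr 1; ring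
    calc (u:ℂ) * Complex.exp (t:ℂ) * ((u:ℂ) ^ (s-1-c) * Complex.exp ((t:ℂ) * (s-1-c))
          * ((t ^ (α-1) : ℝ) : ℂ))
        = ((u:ℂ) * (u:ℂ) ^ (s-1-c)) * ((Complex.exp (t:ℂ) * Complex.exp ((t:ℂ) * (s-1-c)))
          * ((t ^ (α-1) : ℝ) : ℂ)) := by ring
      _ = (u:ℂ) ^ (s - c) * (((t ^ (α-1) : ℝ) : ℂ) * Complex.exp (-(((c:ℂ) - s) * t))) := by
          rw [h1, h2]; ring
  rw [show Ioi u = (fun t : ℝ => u * Real.exp t) '' (Ioi 0) from (subst_img hu).symm,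
    integral_image_eq_integral_abs_deriv_smul measurableSet_Ioi subst_deriv (subst_inj hu) g,
    setIntegral_congr_fun measurableSet_Ioi htrans, integral_const_mul,
    gamma_cintegral hα hzre]

end Helpers

/-- If ν < c and f ∈ Dom J^α_{0+,c} ∩ X_{[ν,c]}, then J^α_{0+,c} f ∈ X_ν with
‖J^α_{0+,c} f‖_{X_ν} ≤ ‖f‖_{X_ν}/(c−ν)^α, and
M[J^α_{0+,c} f](ν+it) = (c−ν−it)^{-α} M[f](ν+it). -/
theorem stmt15 (α c ν : ℝ) (hα : 0 < α) (hν : ν < c) (f : ℝ → ℂ)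
    (hmeas : Measurable f) (hdom : memDomJ α c f)
    (hf : ∀ μ ∈ Set.Icc ν c, memXc μ f) :
    memXc ν (hadamardJ α c f) ∧
    (∫ x in Set.Ioi (0 : ℝ), x ^ (ν - 1) * ‖hadamardJ α c f x‖)
      ≤ (∫ x in Set.Ioi (0 : ℝ), x ^ (ν - 1) * ‖f x‖) / (c - ν) ^ α ∧
    ∀ t : ℝ,
      mellinT (hadamardJ α c f) ((ν : ℂ) + (t : ℂ) * Complex.I)
        = ((c : ℂ) - (ν : ℂ) - (t : ℂ) * Complex.I) ^ (-(α : ℂ)) *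
            mellinT f ((ν : ℂ) + (t : ℂ) * Complex.I) := by
  classical
  have hβ : (0:ℝ) < c - ν := by linarith
  have hΓ : 0 < Real.Gamma α := Real.Gamma_pos_of_pos hα
  have habs : Measurable fun u : ℝ => ‖f u‖ :=
    hmeas.norm
  have hfν : IntegrableOn (fun u : ℝ => u ^ (ν - 1) * ‖f u‖) (Ioi 0) :=
    hf ν ⟨le_refl _, hν.le⟩
  set B : ℝ := ∫ u in Ioi (0:ℝ), u ^ (ν - 1) * ‖f u‖ with hB
  set K : ℝ := (1 / (c - ν)) ^ α * Real.Gamma α with hK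
  have hK0 : 0 ≤ K := by positivity
  set T : Set (ℝ × ℝ) := {p | 0 < p.2 ∧ p.2 < p.1} with hTdef
  have hT : MeasurableSet T := by
    rw [hTdef, show {p : ℝ × ℝ | 0 < p.2 ∧ p.2 < p.1}
      = {p : ℝ × ℝ | 0 < p.2} ∩ {p : ℝ × ℝ | p.2 < p.1} from rfl]
    exact (measurableSet_lt measurable_const measurable_snd).inter
      (measurableSet_lt measurable_snd measurable_fst)
  set W : ℝ × ℝ → ℝ := fun p =>
    (p.1 ^ (ν - 1 - c) * Real.log (p.1 / p.2) ^ (α - 1))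
      * (p.2 ^ (c - 1) * ‖f p.2‖) with hWdef
  have hrp : ∀ e : ℝ, Measurable fun y : ℝ => y ^ e := fun e => by fun_prop
  have hlg : Measurable Real.log := Real.measurable_log
  have hWm : Measurable W :=
    (((hrp _).comp measurable_fst).mul
      ((hrp _).comp (hlg.comp (measurable_fst.div measurable_snd)))).mul
      (((hrp _).comp measurable_snd).mul (habs.comp measurable_snd))
  set Wi : ℝ × ℝ → ℝ := T.indicator W with hWidef
  have hWim : Measurable fun p : ℝ × ℝ => ENNReal.ofReal (Wi p) :=
    (hWm.indicator hT).ennreal_ofReal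
  -- nonnegativity of W on T
  have hWnn : ∀ p : ℝ × ℝ, p ∈ T → 0 ≤ W p := by
    rintro ⟨x, u⟩ ⟨hu, hux⟩
    have hx : (0:ℝ) < x := lt_trans hu hux
    have hlog : 0 ≤ Real.log (x / u) := Real.log_nonneg ((one_le_div hu).mpr hux.le)
    exact mul_nonneg (mul_nonneg (Real.rpow_nonneg hx.le _) (Real.rpow_nonneg hlog _))
      (mul_nonneg (Real.rpow_nonneg hu.le _) (norm_nonneg _))
  -- the u-section of the indicator (x fixed)
  have hsec_u : ∀ x : ℝ, (fun u => ENNReal.ofReal (Wi (x, u)))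
      = (Ioo (0:ℝ) x).indicator (fun u => ENNReal.ofReal (W (x, u))) := by
    intro x
    funext u
    by_cases h : (x, u) ∈ T
    · rw [hWidef, indicator_of_mem h, indicator_of_mem (by exact h)]
    · rw [hWidef, indicator_of_notMem h, indicator_of_notMem (by exact h),
        ENNReal.ofReal_zero]
  -- the x-section of the indicator (u fixed, u > 0)
  have hsec_x : ∀ u : ℝ, 0 < u → (fun x => ENNReal.ofReal (Wi (x, u)))
      = (Ioi u).indicator (fun x => ENNReal.ofReal (W (x, u))) := by
    intro u hu
    funext x
    by_cases h : u < x
    · rw [hWidef, indicator_of_mem (show (x, u) ∈ T from ⟨hu, h⟩),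
        indicator_of_mem (mem_Ioi.mpr h)]
    · rw [hWidef, indicator_of_notMem (show (x, u) ∉ T from fun hc => h hc.2),
        indicator_of_notMem (by simpa using h), ENNReal.ofReal_zero]
  -- inner lintegral over x for fixed u > 0
  have hTon1 : ∀ u : ℝ, 0 < u → (∫⁻ x in Ioi (0:ℝ), ENNReal.ofReal (Wi (x, u)))
      = ENNReal.ofReal K * ENNReal.ofReal (u ^ (ν - 1) * ‖f u‖) := by
    intro u hu
    rw [hsec_x u hu, lintegral_indicator measurableSet_Ioi,
      Measure.restrict_restrict measurableSet_Ioi,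
      inter_eq_self_of_subset_left (Ioi_subset_Ioi hu.le)]
    have hcongr : ∀ x ∈ Ioi u, ENNReal.ofReal (W (x, u))
        = ENNReal.ofReal (x ^ (ν - 1 - c) * Real.log (x / u) ^ (α - 1))
          * ENNReal.ofReal (u ^ (c - 1) * ‖f u‖) := by
      intro x hx
      have hx0 : (0:ℝ) < x := lt_trans hu hx
      rw [hWdef, ENNReal.ofReal_mul
        (mul_nonneg (Real.rpow_nonneg hx0.le _)
          (Real.rpow_nonneg (Real.log_nonneg ((one_le_div hu).mpr (le_of_lt hx))) _))]
    rw [setLIntegral_congr_fun measurableSet_Ioi hcongr,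
      lintegral_mul_const _ (show Measurable fun x : ℝ =>
        ENNReal.ofReal (x ^ (ν - 1 - c) * Real.log (x / u) ^ (α - 1)) from
        Measurable.ennreal_ofReal (by fun_prop))]
    have hnn : 0 ≤ᵐ[volume.restrict (Ioi u)]
        fun x => x ^ (ν - 1 - c) * Real.log (x / u) ^ (α - 1) := by
      filter_upwards [ae_restrict_mem measurableSet_Ioi] with x hx
      have hx0 : (0:ℝ) < x := lt_trans hu hx
      exact mul_nonneg (Real.rpow_nonneg hx0.le _)
        (Real.rpow_nonneg (Real.log_nonneg ((one_le_div hu).mpr (le_of_lt hx))) _)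
    rw [← ofReal_integral_eq_lintegral_ofReal (key_real hα hν hu).1 hnn,
      (key_real hα hν hu).2]
    rw [← ENNReal.ofReal_mul (by positivity), ← ENNReal.ofReal_mul (by positivity)]
    congr 1
    have h5 : u ^ (ν - 1) = u ^ (ν - c) * u ^ (c - 1) := by
      rw [← Real.rpow_add hu]; (try congr 1); (try ring)
    rw [hK, h5]; ring
  -- full Tonelli value
  have hIone : ∫⁻ u in Ioi (0:ℝ), ENNReal.ofReal (u ^ (ν - 1) * ‖f u‖)
      = ENNReal.ofReal B := by
    rw [hB, ofReal_integral_eq_lintegral_ofReal hfν ?_]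
    filter_upwards [ae_restrict_mem measurableSet_Ioi] with u hu
    exact mul_nonneg (Real.rpow_nonneg (le_of_lt hu) _) (norm_nonneg _)
  have hof1 : Measurable fun u : ℝ => ENNReal.ofReal (u ^ (ν - 1) * ‖f u‖) :=
    ((hrp _).mul habs).ennreal_ofReal
  have hTon : ∫⁻ u in Ioi (0:ℝ), ∫⁻ x in Ioi (0:ℝ), ENNReal.ofReal (Wi (x, u))
      = ENNReal.ofReal K * ENNReal.ofReal B := by
    have : ∀ u ∈ Ioi (0:ℝ), (∫⁻ x in Ioi (0:ℝ), ENNReal.ofReal (Wi (x, u)))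
        = ENNReal.ofReal K * ENNReal.ofReal (u ^ (ν - 1) * ‖f u‖) :=
      fun u hu => hTon1 u hu
    rw [setLIntegral_congr_fun measurableSet_Ioi this,
      lintegral_const_mul _ hof1, hIone]
  have hWprodm : AEMeasurable (fun p : ℝ × ℝ => ENNReal.ofReal (Wi p)) ((volume.restrict (Ioi (0:ℝ))).prod (volume.restrict (Ioi (0:ℝ)))) :=
    hWim.aemeasurable
  have hP2 : ∫⁻ p, ENNReal.ofReal (Wi p) ∂((volume.restrict (Ioi (0:ℝ))).prod (volume.restrict (Ioi (0:ℝ))))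
      = ENNReal.ofReal K * ENNReal.ofReal B := by
    rw [lintegral_prod_symm _ hWprodm]; exact hTon
  have hP1 : ∫⁻ x in Ioi (0:ℝ), ∫⁻ u in Ioi (0:ℝ), ENNReal.ofReal (Wi (x, u))
      = ENNReal.ofReal K * ENNReal.ofReal B := by
    rw [← lintegral_prod _ hWprodm]; exact hP2
  -- measurability of hadamardJ
  set Φ : ℝ × ℝ → ℂ := T.indicator (fun q =>
    (((q.2 / q.1) ^ c * Real.log (q.1 / q.2) ^ (α - 1) / q.2 : ℝ) : ℂ) * f q.2) with hΦdef
  have hΦm : Measurable Φ := by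
    apply Measurable.indicator _ hT
    refine Measurable.mul (Complex.measurable_ofReal.comp ?_) (hmeas.comp measurable_snd)
    exact (((hrp _).comp (measurable_snd.div measurable_fst)).mul
      ((hrp _).comp (hlg.comp (measurable_fst.div measurable_snd)))).div measurable_snd
  have hJrw : ∀ x : ℝ, hadamardJ α c f x
      = ((1 / Real.Gamma α : ℝ) : ℂ) * ∫ u, Φ (x, u) := by
    intro x
    rw [hadamardJ]
    congr 1
    rw [← integral_indicator measurableSet_Ioo]
    refine integral_congr_ae (Filter.Eventually.of_forall fun u => ?_)
    beta_reduce
    by_cases h : u ∈ Ioo (0:ℝ) x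
    · rw [indicator_of_mem h, hΦdef,
        indicator_of_mem (show (x, u) ∈ T from ⟨h.1, h.2⟩)]
    · rw [indicator_of_notMem h, hΦdef,
        indicator_of_notMem (show (x, u) ∉ T from fun hc => h ⟨hc.1, hc.2⟩)]
  have hJmeas : AEStronglyMeasurable (hadamardJ α c f) volume := by
    rw [show hadamardJ α c f = fun x => ((1 / Real.Gamma α : ℝ) : ℂ) * ∫ u, Φ (x, u)
      from funext hJrw]
    exact (hΦm.aestronglyMeasurable.integral_prod_right').const_mul _
  have hgm : AEStronglyMeasurable
      (fun x : ℝ => x ^ (ν - 1) * ‖hadamardJ α c f x‖) (volume.restrict (Ioi (0:ℝ))) := by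
    have h1 : Measurable (fun x : ℝ => x ^ (ν - 1)) := by fun_prop
    have h2 : (fun x : ℝ => x ^ (ν - 1) * ‖hadamardJ α c f x‖)
        = fun x : ℝ => x ^ (ν - 1) * ‖hadamardJ α c f x‖ := by
      funext x; rfl
    rw [h2]
    exact (h1.aestronglyMeasurable.mul hJmeas.norm).restrict
  -- pointwise bound for x > 0
  have hptw : ∀ x : ℝ, 0 < x →
      ENNReal.ofReal (x ^ (ν - 1) * ‖hadamardJ α c f x‖)
        ≤ ENNReal.ofReal (Real.Gamma α)⁻¹ * ∫⁻ u in Ioi (0:ℝ), ENNReal.ofReal (Wi (x, u)) := by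
    intro x hx
    -- the inner lintegral as a set-lintegral over Ioo 0 x
    have hlin : (∫⁻ u in Ioi (0:ℝ), ENNReal.ofReal (Wi (x, u)))
        = ∫⁻ u in Ioo (0:ℝ) x, ENNReal.ofReal (W (x, u)) := by
      rw [hsec_u x, lintegral_indicator measurableSet_Ioo,
        Measure.restrict_restrict measurableSet_Ioo,
        inter_eq_self_of_subset_left Ioo_subset_Ioi_self]
    rw [hlin]
    -- bound the real quantity
    have hWx : ∀ u ∈ Ioo (0:ℝ) x,
        x ^ (ν - 1) * ‖(((u / x) ^ c * Real.log (x / u) ^ (α - 1) / u : ℝ) : ℂ) * f u‖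
          = W (x, u) := by
      intro u hu
      have hu0 : (0:ℝ) < u := hu.1
      have hux : u < x := hu.2
      have hlog : 0 ≤ Real.log (x / u) := Real.log_nonneg ((one_le_div hu0).mpr hux.le)
      rw [norm_mul, Complex.norm_real, Real.norm_eq_abs, _root_.abs_of_nonneg (by positivity),
        hWdef]
      have hr : (u / x) ^ c * Real.log (x / u) ^ (α - 1) / u
          = x ^ (-c) * (Real.log (x / u) ^ (α - 1) * u ^ (c - 1)) := by
        rw [Real.div_rpow hu0.le hx.le, Real.rpow_neg hx.le, Real.rpow_sub_one hu0.ne']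
        ring
      rw [hr]
      have hxc : x ^ (ν - 1) * x ^ (-c) = x ^ (ν - 1 - c) := by
        rw [← Real.rpow_add hx]; (try congr 1); (try ring)
      calc x ^ (ν-1) * (x ^ (-c) * (Real.log (x/u) ^ (α-1) * u ^ (c-1)) * ‖f u‖)
          = (x ^ (ν-1) * x ^ (-c)) * Real.log (x/u) ^ (α-1)
            * (u ^ (c-1) * ‖f u‖) := by ring
        _ = x ^ (ν-1-c) * Real.log (x/u) ^ (α-1) * (u ^ (c-1) * ‖f u‖) := by
            rw [hxc]
        _ = W (x, u) := by rw [hWdef]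
    have hJb : x ^ (ν - 1) * ‖hadamardJ α c f x‖
        ≤ (Real.Gamma α)⁻¹ * ∫ u in Ioo (0:ℝ) x, W (x, u) := by
      rw [hadamardJ, norm_mul]
      have habsC : ‖((1 / Real.Gamma α : ℝ) : ℂ)‖ = (Real.Gamma α)⁻¹ := by
        rw [Complex.norm_real, Real.norm_eq_abs, _root_.abs_of_nonneg (by positivity), one_div]
      rw [habsC]
      have h1 : ‖(∫ u in Ioo (0:ℝ) x,
            (((u / x) ^ c * Real.log (x / u) ^ (α - 1) / u : ℝ) : ℂ) * f u)‖
          ≤ ∫ u in Ioo (0:ℝ) x,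
            ‖(((u / x) ^ c * Real.log (x / u) ^ (α - 1) / u : ℝ) : ℂ) * f u‖ := by
        exact norm_integral_le_integral_norm _
      calc x ^ (ν-1) * ((Real.Gamma α)⁻¹ * ‖∫ u in Ioo (0:ℝ) x, _‖)
          ≤ (Real.Gamma α)⁻¹ * (x ^ (ν-1) * ∫ u in Ioo (0:ℝ) x,
              ‖(((u / x) ^ c * Real.log (x / u) ^ (α - 1) / u : ℝ) : ℂ) * f u‖) := by
            rw [show x ^ (ν-1) * ((Real.Gamma α)⁻¹ * ‖_‖)
              = (Real.Gamma α)⁻¹ * (x ^ (ν-1) * ‖_‖) by ring]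
            have hxp : (0:ℝ) ≤ x ^ (ν-1) := Real.rpow_nonneg hx.le _
            exact mul_le_mul_of_nonneg_left
              (mul_le_mul_of_nonneg_left h1 hxp) (by positivity)
        _ = (Real.Gamma α)⁻¹ * ∫ u in Ioo (0:ℝ) x,
              x ^ (ν-1) * ‖(((u / x) ^ c * Real.log (x / u) ^ (α - 1) / u : ℝ) : ℂ) * f u‖ := by
            rw [integral_const_mul]
        _ = (Real.Gamma α)⁻¹ * ∫ u in Ioo (0:ℝ) x, W (x, u) := by
            rw [setIntegral_congr_fun measurableSet_Ioo hWx]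
    calc ENNReal.ofReal (x ^ (ν - 1) * ‖hadamardJ α c f x‖)
        ≤ ENNReal.ofReal ((Real.Gamma α)⁻¹ * ∫ u in Ioo (0:ℝ) x, W (x, u)) :=
          ENNReal.ofReal_le_ofReal hJb
      _ = ENNReal.ofReal (Real.Gamma α)⁻¹
            * ENNReal.ofReal (∫ u in Ioo (0:ℝ) x, W (x, u)) := by
          rw [ENNReal.ofReal_mul (by positivity)]
      _ ≤ ENNReal.ofReal (Real.Gamma α)⁻¹ * ∫⁻ u in Ioo (0:ℝ) x, ENNReal.ofReal (W (x, u)) := by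
          gcongr
          by_cases hI : IntegrableOn (fun u => W (x, u)) (Ioo 0 x) volume
          · rw [ofReal_integral_eq_lintegral_ofReal hI ?_]
            filter_upwards [ae_restrict_mem measurableSet_Ioo] with u hu
            exact hWnn (x, u) ⟨hu.1, hu.2⟩
          · rw [integral_undef hI, ENNReal.ofReal_zero]
            exact zero_le
  -- the main lintegral bound
  have hLbound : (∫⁻ x in Ioi (0:ℝ), ENNReal.ofReal (x ^ (ν - 1) * ‖hadamardJ α c f x‖))
      ≤ ENNReal.ofReal (B / (c - ν) ^ α) := by
    have h1 : (∫⁻ x in Ioi (0:ℝ), ENNReal.ofReal (x ^ (ν - 1) * ‖hadamardJ α c f x‖))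
        ≤ ∫⁻ x in Ioi (0:ℝ), ENNReal.ofReal (Real.Gamma α)⁻¹ * ∫⁻ u in Ioi (0:ℝ), ENNReal.ofReal (Wi (x, u)) := by
      apply lintegral_mono_ae
      filter_upwards [ae_restrict_mem measurableSet_Ioi] with x hx
      exact hptw x hx
    have h2 : (∫⁻ x in Ioi (0:ℝ), ENNReal.ofReal (Real.Gamma α)⁻¹ * ∫⁻ u in Ioi (0:ℝ), ENNReal.ofReal (Wi (x, u)))
        = ENNReal.ofReal (Real.Gamma α)⁻¹ * (ENNReal.ofReal K * ENNReal.ofReal B) := by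
      rw [lintegral_const_mul _ (hWim.lintegral_prod_right'), hP1]
    have h3 : ENNReal.ofReal (Real.Gamma α)⁻¹ * (ENNReal.ofReal K * ENNReal.ofReal B)
        = ENNReal.ofReal (B / (c - ν) ^ α) := by
      rw [← ENNReal.ofReal_mul (by positivity), ← ENNReal.ofReal_mul (by positivity)]
      congr 1
      rw [hK, one_div, Real.inv_rpow hβ.le]
      field_simp
    calc _ ≤ _ := h1
      _ = _ := h2
      _ = _ := h3
  have hBnn : 0 ≤ B := by
    rw [hB]
    apply setIntegral_nonneg measurableSet_Ioi
    intro u hu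
    exact mul_nonneg (Real.rpow_nonneg (le_of_lt hu) _) (norm_nonneg _)
  -- part 1 : membership
  have hmem : memXc ν (hadamardJ α c f) := by
    refine ⟨hgm, ?_⟩
    rw [hasFiniteIntegral_iff_ofReal ?_]
    · exact lt_of_le_of_lt hLbound ENNReal.ofReal_lt_top
    · filter_upwards [ae_restrict_mem measurableSet_Ioi] with x hx
      exact mul_nonneg (Real.rpow_nonneg (le_of_lt hx) _) (norm_nonneg _)
  refine ⟨hmem, ?_, ?_⟩
  · -- part 2 : norm bound
    have hnn : 0 ≤ᵐ[volume.restrict (Ioi (0:ℝ))] fun x => x ^ (ν - 1) * ‖hadamardJ α c f x‖ := by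
      filter_upwards [ae_restrict_mem measurableSet_Ioi] with x hx
      exact mul_nonneg (Real.rpow_nonneg (le_of_lt hx) _) (norm_nonneg _)
    rw [show (∫ x in Ioi (0:ℝ), x ^ (ν - 1) * ‖hadamardJ α c f x‖)
      = ∫ x, (fun x => x ^ (ν - 1) * ‖hadamardJ α c f x‖) x ∂(volume.restrict (Ioi (0:ℝ))) from rfl,
      integral_eq_lintegral_of_nonneg_ae hnn hgm]
    have := ENNReal.toReal_mono (by simp) hLbound
    rw [ENNReal.toReal_ofReal (by positivity)] at this
    exact this
  · -- part 3 : Mellin transform identity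
    intro t
    set s : ℂ := (ν : ℂ) + (t : ℂ) * Complex.I with hsdef
    have hs_re : s.re = ν := by simp [hsdef]
    set Ks : ℝ × ℝ → ℂ := fun p =>
      ((p.1 : ℂ) ^ (s - 1 - (c:ℂ)) * ((Real.log (p.1 / p.2) ^ (α - 1) : ℝ) : ℂ))
        * (((p.2 ^ (c - 1) : ℝ) : ℂ) * f p.2) with hKsdef
    set Gs : ℝ × ℝ → ℂ := T.indicator Ks with hGsdef
    have hcp : Measurable fun y : ℝ => (y:ℂ) ^ (s - 1 - (c:ℂ)) := by fun_prop
    have hKsm : Measurable Ks :=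
      ((hcp.comp measurable_fst).mul (Complex.measurable_ofReal.comp
        ((hrp _).comp (hlg.comp (measurable_fst.div measurable_snd))))).mul
        ((Complex.measurable_ofReal.comp ((hrp _).comp measurable_snd)).mul
          (hmeas.comp measurable_snd))
    have hGsm : Measurable Gs := hKsm.indicator hT
    -- norms agree with Wi
    have hnorm : ∀ p : ℝ × ℝ, ‖Gs p‖ₑ = ENNReal.ofReal (Wi p) := by
      intro p
      rw [← ofReal_norm]
      congr 1
      by_cases hp : p ∈ T
      · rw [hGsdef, hWidef, indicator_of_mem hp, indicator_of_mem hp]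
        obtain ⟨hp2, hp21⟩ := hp
        have hp1 : (0:ℝ) < p.1 := lt_trans hp2 hp21
        have hlog : 0 ≤ Real.log (p.1 / p.2) := Real.log_nonneg ((one_le_div hp2).mpr hp21.le)
        rw [hKsdef, hWdef]
        have hre : (s - 1 - (c:ℂ)).re = ν - 1 - c := by
          simp [Complex.sub_re, Complex.one_re, Complex.ofReal_re, hs_re]
        rw [norm_mul, norm_mul, norm_mul, Complex.norm_real, Complex.norm_real,
          Real.norm_eq_abs, Real.norm_eq_abs,
          _root_.abs_of_nonneg (Real.rpow_nonneg hlog _),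
          _root_.abs_of_nonneg (Real.rpow_nonneg hp2.le _),
          Complex.norm_cpow_eq_rpow_re_of_pos hp1, hre]
      · rw [hGsdef, hWidef, indicator_of_notMem hp, indicator_of_notMem hp, norm_zero]
    have hGsint : Integrable Gs ((volume.restrict (Ioi (0:ℝ))).prod (volume.restrict (Ioi (0:ℝ)))) := by
      refine ⟨hGsm.aestronglyMeasurable, ?_⟩
      rw [hasFiniteIntegral_def, lintegral_congr_ae (ae_of_all _ hnorm), hP2]
      exact ENNReal.mul_lt_top ENNReal.ofReal_lt_top ENNReal.ofReal_lt_top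
    -- rewrite the Mellin transform of hadamardJ
    have hM1 : mellinT (hadamardJ α c f) s
        = ((1 / Real.Gamma α : ℝ) : ℂ) * ∫ x in Ioi (0:ℝ), ∫ u in Ioi (0:ℝ), Gs (x, u) := by
      rw [mellinT, ← integral_const_mul]
      refine setIntegral_congr_fun measurableSet_Ioi (fun x hx => ?_)
      have hx : (0:ℝ) < x := hx
      rw [hadamardJ]
      have hinner : ∫ u in Ioi (0:ℝ), Gs (x, u)
          = ∫ u in Ioo (0:ℝ) x, Ks (x, u) := by
        have : (fun u => Gs (x, u)) = (Ioo (0:ℝ) x).indicator (fun u => Ks (x, u)) := by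
          funext u
          by_cases h : u ∈ Ioo (0:ℝ) x
          · rw [hGsdef, indicator_of_mem (show (x, u) ∈ T from ⟨h.1, h.2⟩),
              indicator_of_mem h]
          · rw [hGsdef, indicator_of_notMem (show (x, u) ∉ T from fun hc => h ⟨hc.1, hc.2⟩),
              indicator_of_notMem h]
        rw [this, setIntegral_indicator measurableSet_Ioo,
          inter_eq_self_of_subset_right Ioo_subset_Ioi_self]
      rw [hinner]
      rw [show (x:ℂ) ^ (s - 1) * (((1 / Real.Gamma α : ℝ) : ℂ) * ∫ u in Ioo (0:ℝ) x,
          (((u / x) ^ c * Real.log (x / u) ^ (α - 1) / u : ℝ) : ℂ) * f u)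
        = ((1 / Real.Gamma α : ℝ) : ℂ) * ((x:ℂ) ^ (s - 1) * ∫ u in Ioo (0:ℝ) x,
          (((u / x) ^ c * Real.log (x / u) ^ (α - 1) / u : ℝ) : ℂ) * f u) by ring]
      congr 1
      rw [← integral_const_mul]
      refine setIntegral_congr_fun measurableSet_Ioo (fun u hu => ?_)
      have hu0 : (0:ℝ) < u := hu.1
      have hux : u < x := hu.2
      have hr : ((u / x) ^ c * Real.log (x / u) ^ (α - 1) / u : ℝ)
          = x ^ (-c) * (Real.log (x / u) ^ (α - 1) * u ^ (c - 1)) := by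
        rw [Real.div_rpow hu0.le hx.le, Real.rpow_neg hx.le, Real.rpow_sub_one hu0.ne']
        ring
      rw [hr, Complex.ofReal_mul, Complex.ofReal_mul]
      have hxc : (x:ℂ) ^ (s - 1) * ((x ^ (-c) : ℝ) : ℂ) = (x:ℂ) ^ (s - 1 - (c:ℂ)) := by
        rw [Complex.ofReal_cpow hx.le, Complex.ofReal_neg,
          ← Complex.cpow_add _ _ (Complex.ofReal_ne_zero.mpr hx.ne')]
        (try congr 1); (try ring)
      rw [hKsdef]
      calc (x:ℂ) ^ (s-1) * (((x ^ (-c):ℝ):ℂ) * (((Real.log (x/u) ^ (α-1) : ℝ):ℂ)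
            * ((u ^ (c-1) : ℝ):ℂ)) * f u)
          = ((x:ℂ) ^ (s-1) * ((x ^ (-c):ℝ):ℂ)) * ((Real.log (x/u) ^ (α-1) : ℝ):ℂ)
            * (((u ^ (c-1) : ℝ):ℂ) * f u) := by ring
        _ = ((x:ℂ) ^ (s - 1 - (c:ℂ)) * ((Real.log (x/u) ^ (α-1) : ℝ):ℂ))
            * (((u ^ (c-1) : ℝ):ℂ) * f u) := by rw [hxc]
    -- Fubini
    have hswap : (∫ x in Ioi (0:ℝ), ∫ u in Ioi (0:ℝ), Gs (x, u)) = ∫ u in Ioi (0:ℝ), ∫ x in Ioi (0:ℝ), Gs (x, u) :=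
      integral_integral_swap hGsint
    -- inner x-integral for u > 0
    have hinner2 : ∀ u : ℝ, 0 < u → (∫ x in Ioi (0:ℝ), Gs (x, u))
        = ((Real.Gamma α : ℂ) * ((c:ℂ) - s) ^ (-(α:ℂ))) * ((u:ℂ) ^ (s - 1) * f u) := by
      intro u hu
      have hsec : (fun x => Gs (x, u)) = (Ioi u).indicator (fun x => Ks (x, u)) := by
        funext x
        by_cases h : u < x
        · rw [hGsdef, indicator_of_mem (show (x, u) ∈ T from ⟨hu, h⟩),
            indicator_of_mem (mem_Ioi.mpr h)]
        · rw [hGsdef, indicator_of_notMem (show (x, u) ∉ T from fun hc => h hc.2),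
            indicator_of_notMem (by simpa using h)]
      rw [hsec, setIntegral_indicator measurableSet_Ioi,
        inter_eq_self_of_subset_right (Ioi_subset_Ioi hu.le)]
      rw [hKsdef]
      simp only
      rw [integral_mul_const, key_complex hα hν hs_re hu]
      have hcu : (u:ℂ) ^ (s - (c:ℂ)) * ((u ^ (c - 1) : ℝ) : ℂ) = (u:ℂ) ^ (s - 1) := by
        rw [Complex.ofReal_cpow hu.le, Complex.ofReal_sub, Complex.ofReal_one,
          ← Complex.cpow_add _ _ (Complex.ofReal_ne_zero.mpr hu.ne')]
        (try congr 1); (try ring)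
      calc ((u:ℂ) ^ (s - (c:ℂ)) * ((Real.Gamma α : ℂ) * ((c:ℂ) - s) ^ (-(α:ℂ))))
            * (((u ^ (c-1) : ℝ):ℂ) * f u)
          = ((Real.Gamma α : ℂ) * ((c:ℂ) - s) ^ (-(α:ℂ)))
            * (((u:ℂ) ^ (s - (c:ℂ)) * ((u ^ (c-1):ℝ):ℂ)) * f u) := by ring
        _ = _ := by rw [hcu]
    have hfinal : (∫ u in Ioi (0:ℝ), ∫ x in Ioi (0:ℝ), Gs (x, u))
        = ((Real.Gamma α : ℂ) * ((c:ℂ) - s) ^ (-(α:ℂ))) * mellinT f s := by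
      rw [setIntegral_congr_fun measurableSet_Ioi (fun u hu => hinner2 u hu)]
      rw [integral_const_mul, mellinT]
    rw [show ((ν:ℂ) + (t:ℂ) * Complex.I) = s from rfl] at *
    rw [hM1, hswap, hfinal]
    have hone : ((1 / Real.Gamma α : ℝ) : ℂ) * (Real.Gamma α : ℂ) = 1 := by
      rw [← Complex.ofReal_mul, one_div, inv_mul_cancel₀ hΓ.ne', Complex.ofReal_one]
    have hcs : (c:ℂ) - s = (c:ℂ) - (ν:ℂ) - (t:ℂ) * Complex.I := by
      rw [hsdef]; ring
    calc ((1 / Real.Gamma α : ℝ) : ℂ)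
          * (((Real.Gamma α : ℂ) * ((c:ℂ) - s) ^ (-(α:ℂ))) * mellinT f s)
        = (((1 / Real.Gamma α : ℝ) : ℂ) * (Real.Gamma α : ℂ))
          * (((c:ℂ) - s) ^ (-(α:ℂ)) * mellinT f s) := by ring
      _ = ((c:ℂ) - (ν:ℂ) - (t:ℂ) * Complex.I) ^ (-(α:ℂ)) * mellinT f s := by
          rw [hone, hcs, one_mul]
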